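/- Let n ≥ 5 be an odd integer, m a positive integer, and x, y : Fin m → Fin n → ℤ. Then B(x,y) ∈ ℤ if and only if ρ(x)·ρ(y) = 0 in ZMod 4, and B(x,x) ∈ 2ℤ if and only if 8 divides wt_E(ρ(x)). -/

import Mathlib

open Finset

/-- The coefficient `g(l) = (1/4)(−1)^l (n − 2l)`. -/
noncomputable def gD (n : ℕ) (l : Fin n) : ℚ :=
  (1 / 4) * (-1 : ℚ) ^ (l : ℕ) * ((n : ℚ) - 2 * (l : ℕ))

/-- The bilinear form of `m` copies of the dual `D_n` root lattice (`n` odd),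
written in the dual basis: `B(x,y) = Σ_i Σ_j Σ_s g((s−j) mod n) x_{ij} y_{is}`. -/
noncomputable def BDodd (n m : ℕ) (x y : Fin m → Fin n → ℚ) : ℚ :=
  ∑ i, ∑ j, ∑ s, gD n (s - j) * x i j * y i s

/-- The reduction map to `(ℤ/4ℤ)^m`. -/
def rhoDodd (n m : ℕ) (x : Fin m → Fin n → ℤ) : Fin m → ZMod 4 :=
  fun i => ((∑ j, x i j : ℤ) : ZMod 4)

/-- The Euclidean weight of an element of `(ℤ/4ℤ)^m`. -/
def wtE4 (m : ℕ) (u : Fin m → ZMod 4) : ℕ :=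
  ∑ i, (u i).val ^ 2

/-- integer numerator coefficient -/
def cD (n : ℕ) (l : ℕ) : ℤ := (-1) ^ l * ((n : ℤ) - 2 * l)

lemma gD_eq (n : ℕ) (l : Fin n) : gD n l = (cD n l.val : ℚ) / 4 := by
  simp only [gD, cD]; push_cast; ring

lemma cD_zero (n : ℕ) : cD n 0 = n := by simp [cD]

lemma cD_sub_dvd {n : ℕ} (hodd : Odd n) (l : ℕ) : (4 : ℤ) ∣ cD n l - n := by
  rcases Nat.even_or_odd l with he | ho
  · rw [cD, he.neg_one_pow, one_mul]
    obtain ⟨t, ht⟩ := he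
    subst ht; push_cast; ring_nf; omega
  · rw [cD, ho.neg_one_pow, neg_one_mul]
    obtain ⟨a, ha⟩ := hodd
    obtain ⟨b, hb⟩ := ho
    subst ha hb; push_cast; ring_nf; omega

lemma cD_symm {n : ℕ} (hodd : Odd n) {l : ℕ} (h0 : 0 < l) (hl : l < n) :
    cD n (n - l) = cD n l := by
  have hpar : (-1 : ℤ) ^ (n - l) = -(-1) ^ l := by
    rcases Nat.even_or_odd l with he | ho
    · have : Odd (n - l) := by
        rcases hodd with ⟨a, ha⟩; rcases he with ⟨b, hb⟩
        exact ⟨a - b, by omega⟩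
      rw [this.neg_one_pow, he.neg_one_pow]
    · have : Even (n - l) := by
        rcases hodd with ⟨a, ha⟩; rcases ho with ⟨b, hb⟩
        exact ⟨a - b, by omega⟩
      rw [this.neg_one_pow, ho.neg_one_pow]; ring
  rw [cD, cD, hpar]
  have : ((n - l : ℕ) : ℤ) = (n : ℤ) - l := by omega
  rw [this]; ring

lemma fin_val_neg {n : ℕ} [NeZero n] (t : Fin n) (ht : t ≠ 0) : (-t).val = n - t.val := by
  have h0 : 0 < t.val := by
    rcases Nat.eq_zero_or_pos t.val with h | h
    · exact absurd (Fin.ext h) ht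
    · exact h
  have hv : (-t).val = (n - t.val) % n := rfl
  rw [hv]
  exact Nat.mod_eq_of_lt (by have := t.isLt; omega)

/-- Key mod-8 fact for the symmetrized off-diagonal coefficients. -/
lemma key8 {n : ℕ} [NeZero n] (hn : 5 ≤ n) (hodd : Odd n) (j s : Fin n) :
    (8 : ℤ) ∣ (cD n ((s - j : Fin n)).val - n) + (cD n ((j - s : Fin n)).val - n) := by
  by_cases h : s = j
  · subst h
    simp [cD_zero]
  · have ht : (s - j : Fin n) ≠ 0 := sub_ne_zero_of_ne h
    have hneg : (j - s : Fin n) = -(s - j) := (neg_sub s j).symm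
    have h0 : 0 < (s - j : Fin n).val := Nat.pos_of_ne_zero (by
      intro hc; exact ht (Fin.ext hc))
    have hlt : (s - j : Fin n).val < n := (s - j : Fin n).isLt
    rw [hneg, fin_val_neg _ ht, cD_symm hodd h0 hlt]
    have := cD_sub_dvd hodd (s - j : Fin n).val
    omega

/-- The integer numerator of the bilinear form. -/
def ND (n m : ℕ) (x y : Fin m → Fin n → ℤ) : ℤ :=
  ∑ i, ∑ j, ∑ s, cD n ((s - j : Fin n)).val * x i j * y i s

lemma BDodd_eq (n m : ℕ) (x y : Fin m → Fin n → ℤ) :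
    BDodd n m (fun i j => (x i j : ℚ)) (fun i j => (y i j : ℚ))
      = ((ND n m x y : ℤ) : ℚ) / 4 := by
  rw [BDodd, ND]
  push_cast
  rw [Finset.sum_div]
  refine Finset.sum_congr rfl fun i _ => ?_
  rw [Finset.sum_div]
  refine Finset.sum_congr rfl fun j _ => ?_
  rw [Finset.sum_div]
  refine Finset.sum_congr rfl fun s _ => ?_
  rw [gD_eq]; ring

lemma exists_int_iff (N : ℤ) :
    (∃ k : ℤ, (k : ℚ) = (N : ℚ) / 4) ↔ (4 : ℤ) ∣ N := by
  constructor
  · rintro ⟨k, hk⟩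
    refine ⟨k, ?_⟩
    have : ((4 * k : ℤ) : ℚ) = (N : ℚ) := by push_cast; rw [hk]; ring
    exact_mod_cast (Int.cast_injective this).symm
  · rintro ⟨k, rfl⟩
    exact ⟨k, by push_cast; ring⟩

lemma exists_two_int_iff (N : ℤ) :
    (∃ k : ℤ, ((2 * k : ℤ) : ℚ) = (N : ℚ) / 4) ↔ (8 : ℤ) ∣ N := by
  constructor
  · rintro ⟨k, hk⟩
    refine ⟨k, ?_⟩
    have : ((8 * k : ℤ) : ℚ) = (N : ℚ) := by push_cast at hk ⊢; linarith
    exact_mod_cast (Int.cast_injective this).symm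
  · rintro ⟨k, rfl⟩
    exact ⟨k, by push_cast; ring⟩


lemma coeff_zmod {M : ℕ} {n : ℕ} (hodd : Odd n) (hM : (M : ℤ) ∣ 4) (l : ℕ) :
    ((cD n l : ℤ) : ZMod M) = ((n : ℤ) : ZMod M) := by
  have h : ((cD n l - n : ℤ) : ZMod M) = 0 := by
    rw [ZMod.intCast_zmod_eq_zero_iff_dvd]
    exact hM.trans (cD_sub_dvd hodd l)
  push_cast at h ⊢
  linear_combination h

lemma ND_zmod4 {n m : ℕ} (hodd : Odd n) (x y : Fin m → Fin n → ℤ) :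
    ((ND n m x y : ℤ) : ZMod 4)
      = (n : ZMod 4) * ∑ i, ((∑ j, x i j : ℤ) : ZMod 4) * ((∑ j, y i j : ℤ) : ZMod 4) := by
  rw [ND]
  push_cast
  rw [Finset.mul_sum]
  refine Finset.sum_congr rfl fun i _ => ?_
  rw [Finset.sum_mul_sum, Finset.mul_sum]
  refine Finset.sum_congr rfl fun j _ => ?_
  rw [Finset.mul_sum]
  refine Finset.sum_congr rfl fun s _ => ?_
  rw [coeff_zmod hodd (by norm_num)]
  push_cast
  ring

lemma rem8 {n : ℕ} [NeZero n] (hn : 5 ≤ n) (hodd : Odd n) (v : Fin n → ℤ) :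
    ∑ j, ∑ s, ((cD n ((s - j : Fin n)).val - (n : ℤ) : ℤ) : ZMod 8)
        * (v j : ZMod 8) * (v s : ZMod 8) = 0 := by
  rw [← Finset.sum_product']
  refine Finset.sum_ninvolution (fun p => (p.2, p.1)) ?_ ?_ (fun p => Finset.mem_univ _)
    (fun p => rfl)
  · rintro ⟨j, s⟩
    simp only
    have h : (((cD n ((s - j : Fin n)).val - (n : ℤ))
        + (cD n ((j - s : Fin n)).val - (n : ℤ)) : ℤ) : ZMod 8) = 0 := by
      rw [ZMod.intCast_zmod_eq_zero_iff_dvd]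
      exact key8 hn hodd j s
    push_cast at h ⊢
    linear_combination (v j : ZMod 8) * (v s : ZMod 8) * h
  · rintro ⟨j, s⟩ hne hc
    apply hne
    have hjs : s = j := by simpa using congrArg Prod.fst hc
    subst hjs
    simp only [sub_self, Fin.val_zero, cD_zero]
    simp

lemma ND_zmod8 {n m : ℕ} [NeZero n] (hn : 5 ≤ n) (hodd : Odd n) (x : Fin m → Fin n → ℤ) :
    ((ND n m x x : ℤ) : ZMod 8)
      = (n : ZMod 8) * ∑ i, ((∑ j, x i j : ℤ) : ZMod 8) ^ 2 := by
  rw [ND]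
  push_cast
  rw [Finset.mul_sum]
  refine Finset.sum_congr rfl fun i _ => ?_
  have hsplit : ∀ j s : Fin n,
      ((cD n ((s - j : Fin n)).val : ℤ) : ZMod 8) * (x i j : ZMod 8) * (x i s : ZMod 8)
        = ((cD n ((s - j : Fin n)).val - (n : ℤ) : ℤ) : ZMod 8)
            * (x i j : ZMod 8) * (x i s : ZMod 8)
          + (n : ZMod 8) * ((x i j : ZMod 8) * (x i s : ZMod 8)) := by
    intro j s; push_cast; ring
  simp only [hsplit]
  rw [Finset.sum_congr rfl fun j _ => Finset.sum_add_distrib, Finset.sum_add_distrib,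
    rem8 hn hodd (x i), zero_add]
  rw [sq, Finset.sum_mul_sum, Finset.mul_sum]
  refine Finset.sum_congr rfl fun j _ => (Finset.mul_sum _ _ _).symm

lemma sq8 (S : ℤ) :
    ((S : ZMod 8)) ^ 2 = ((((S : ZMod 4).val) ^ 2 : ℕ) : ZMod 8) := by
  obtain ⟨t, ht⟩ : ((4 : ℕ) : ℤ) ∣ S - ((S : ZMod 4).val : ℤ) := by
    rw [← ZMod.intCast_zmod_eq_zero_iff_dvd]
    push_cast
    simp [ZMod.natCast_val, ZMod.cast_id, sub_self]
  push_cast at ht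
  have h8 : ((S ^ 2 - ((S : ZMod 4).val : ℤ) ^ 2 : ℤ) : ZMod 8) = 0 := by
    rw [ZMod.intCast_zmod_eq_zero_iff_dvd]
    refine ⟨t * ((S : ZMod 4).val : ℤ) + 2 * t ^ 2, ?_⟩
    push_cast
    linear_combination (S + ((S : ZMod 4).val : ℤ) + 4 * t) * ht
  push_cast at h8 ⊢
  linear_combination h8

theorem stmt7 (n m : ℕ) (hn : 5 ≤ n) (hodd : Odd n) (hm : 0 < m)
    (x y : Fin m → Fin n → ℤ) :
    ((∃ k : ℤ, (k : ℚ) =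
        BDodd n m (fun i j => (x i j : ℚ)) (fun i j => (y i j : ℚ))) ↔
      ∑ i, rhoDodd n m x i * rhoDodd n m y i = 0) ∧
    ((∃ k : ℤ, ((2 * k : ℤ) : ℚ) =
        BDodd n m (fun i j => (x i j : ℚ)) (fun i j => (x i j : ℚ))) ↔
      8 ∣ wtE4 m (rhoDodd n m x)) := by
  haveI : NeZero n := ⟨by omega⟩
  have hcop2 : Nat.Coprime n 2 := hodd.coprime_two_right
  have hu4 : IsUnit ((n : ℕ) : ZMod 4) := by
    rw [ZMod.isUnit_iff_coprime]
    simpa using hcop2.mul_right hcop2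
  have hu8 : IsUnit ((n : ℕ) : ZMod 8) := by
    rw [ZMod.isUnit_iff_coprime]
    simpa using (hcop2.mul_right hcop2).mul_right hcop2
  constructor
  · rw [BDodd_eq, exists_int_iff]
    rw [show (4 : ℤ) = ((4 : ℕ) : ℤ) from rfl, ← ZMod.intCast_zmod_eq_zero_iff_dvd,
      ND_zmod4 hodd, hu4.mul_right_eq_zero]
    rfl
  · rw [BDodd_eq, exists_two_int_iff]
    rw [show (8 : ℤ) = ((8 : ℕ) : ℤ) from rfl, ← ZMod.intCast_zmod_eq_zero_iff_dvd,
      ND_zmod8 hn hodd, hu8.mul_right_eq_zero]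
    have : ∑ i, ((∑ j, x i j : ℤ) : ZMod 8) ^ 2
        = ((wtE4 m (rhoDodd n m x) : ℕ) : ZMod 8) := by
      rw [wtE4, Nat.cast_sum]
      exact Finset.sum_congr rfl fun i _ => sq8 _
    rw [this, ZMod.natCast_eq_zero_iff]
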